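/- Let S, O, A be nonempty finite sets and let β ∈ ℝ^{S×O} be a row-stochastic matrix (entries nonnegative, rows summing to 1) with linearly independent columns, so that βᵀβ is invertible; write β⁺ = (βᵀβ)⁻¹βᵀ. Then the effective policy polytope Δ_A^{S,β} := {β·π : π ∈ Δ_A^O} (matrix product, giving an element of ℝ^{S×A}) satisfies the two descriptions: Δ_A^{S,β} = Δ_A^S ∩ U ∩ C = U ∩ C ∩ D, where U = {τ ∈ ℝ^{S×A} : every column of τ lies in the column space of β}, C = {τ ∈ ℝ^{S×A} : (β⁺τ)(o,a) ≥ 0 for all o ∈ O, a ∈ A}, and D = {τ ∈ ℝ^{S×A} : Σ_a (β⁺τ)(o,a) = 1 for all o ∈ O}. -/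
import Mathlib


open Matrix

/-- Auxiliary: entry of a product as a matrix-vector product with a column. -/
lemma stmt14_mul_col {m n p : Type*} [Fintype n] (M : Matrix m n ℝ) (N : Matrix n p ℝ)
    (i : m) (j : p) : (M * N) i j = (M *ᵥ fun k => N k j) i := by
  simp [Matrix.mul_apply, Matrix.mulVec, dotProduct]

/-- Let `S, O, A` be nonempty finite sets and `β ∈ ℝ^{S×O}` a
row-stochastic matrix with linearly independent columns; write `β⁺ = (βᵀβ)⁻¹βᵀ`. Then the
effective policy polytope `Δ_A^{S,β} = {βπ : π ∈ Δ_A^O}` equals both `Δ_A^S ∩ U ∩ C` and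
`U ∩ C ∩ D`, where `U` is the set of `τ` whose columns lie in the column space of `β`,
`C = {τ : β⁺τ ≥ 0}` and `D = {τ : ∑_a (β⁺τ)(o,a) = 1 for all o}`. -/
theorem stmt14 {S O A : Type*} [Fintype S] [Fintype O] [Fintype A]
    [DecidableEq S] [DecidableEq O] [Nonempty S] [Nonempty O] [Nonempty A]
    (β : Matrix S O ℝ) (hβpos : ∀ s o, 0 ≤ β s o) (hβrow : ∀ s, ∑ o, β s o = 1)
    (hβli : LinearIndependent ℝ (fun o : O => βᵀ o)) :
    let βp : Matrix O S ℝ := (βᵀ * β)⁻¹ * βᵀ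
    let ΔAO : Set (Matrix O A ℝ) := {π | (∀ o a, 0 ≤ π o a) ∧ ∀ o, ∑ a, π o a = 1}
    let ΔAS : Set (Matrix S A ℝ) := {τ | (∀ s a, 0 ≤ τ s a) ∧ ∀ s, ∑ a, τ s a = 1}
    let U : Set (Matrix S A ℝ) := {τ | ∀ a, (fun s => τ s a) ∈ LinearMap.range β.mulVecLin}
    let Cc : Set (Matrix S A ℝ) := {τ | ∀ o a, 0 ≤ (βp * τ) o a}
    let Dd : Set (Matrix S A ℝ) := {τ | ∀ o, ∑ a, (βp * τ) o a = 1}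
    (fun π => β * π) '' ΔAO = ΔAS ∩ U ∩ Cc ∧
    (fun π => β * π) '' ΔAO = U ∩ Cc ∩ Dd := by
  intro βp ΔAO ΔAS U Cc Dd
  -- kernel of β is trivial
  have hker : ∀ v : O → ℝ, β *ᵥ v = 0 → v = 0 := by
    intro v hv
    have h := (Fintype.linearIndependent_iff.mp hβli) v ?_
    · funext o; exact h o
    · funext s
      have : (β *ᵥ v) s = 0 := by rw [hv]; rfl
      simpa [Matrix.mulVec, dotProduct, mul_comm] using this
  -- Gram matrix is invertible
  have hgramker : ∀ v : O → ℝ, (βᵀ * β) *ᵥ v = 0 → v = 0 := by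
    intro v hv
    apply hker
    rw [← dotProduct_self_eq_zero]
    calc (β *ᵥ v) ⬝ᵥ (β *ᵥ v) = ((β *ᵥ v) ᵥ* β) ⬝ᵥ v := dotProduct_mulVec _ _ _
      _ = ((βᵀ * β) *ᵥ v) ⬝ᵥ v := by rw [← mulVec_transpose, mulVec_mulVec]
      _ = 0 := by rw [hv, zero_dotProduct]
  have hinj : Function.Injective ((βᵀ * β).mulVec) := by
    intro x y hxy
    have h0 : (βᵀ * β) *ᵥ (x - y) = 0 := by rw [mulVec_sub, hxy, sub_self]
    exact sub_eq_zero.mp (hgramker _ h0)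
  have hdet : IsUnit (βᵀ * β).det :=
    (Matrix.isUnit_iff_isUnit_det _).mp (Matrix.mulVec_injective_iff_isUnit.mp hinj)
  have hpb : βp * β = 1 := by
    show (βᵀ * β)⁻¹ * βᵀ * β = 1
    rw [Matrix.mul_assoc, Matrix.nonsing_inv_mul _ hdet]
  -- recovery identity on the column space
  have hrec : ∀ v : S → ℝ, (∃ x, β *ᵥ x = v) → β *ᵥ (βp *ᵥ v) = v := by
    rintro v ⟨x, rfl⟩
    rw [mulVec_mulVec, mulVec_mulVec, Matrix.mul_assoc, hpb, Matrix.mul_one]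
  -- recovery of τ ∈ U
  have hU_rec : ∀ τ ∈ U, β * (βp * τ) = τ := by
    intro τ hτ
    ext s a
    obtain ⟨x, hx⟩ := hτ a
    rw [stmt14_mul_col]
    have hcol : (fun o => (βp * τ) o a) = βp *ᵥ fun s => τ s a := by
      funext o; rw [stmt14_mul_col]
    rw [hcol, hrec _ ⟨x, hx⟩]
  -- β preserves the all-ones vector, hence so does βp backwards
  have hb1 : β *ᵥ (fun _ => (1:ℝ)) = fun _ => 1 := by
    funext s; simp [Matrix.mulVec, dotProduct, hβrow s]
  have hone : βp *ᵥ (fun _ => (1:ℝ)) = fun _ => 1 := by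
    conv_lhs => rw [← hb1]
    rw [mulVec_mulVec, hpb, one_mulVec]
  -- βp cancels β on the left
  have hpi : ∀ π : Matrix O A ℝ, βp * (β * π) = π := by
    intro π; rw [← Matrix.mul_assoc, hpb, Matrix.one_mul]
  -- forward inclusion facts
  have hfwdU : ∀ π ∈ ΔAO, β * π ∈ U := by
    intro π _ a
    exact ⟨fun o => π o a, by funext s; rw [Matrix.mulVecLin_apply]; exact (stmt14_mul_col _ _ _ _).symm⟩
  have hfwdC : ∀ π ∈ ΔAO, β * π ∈ Cc := by
    intro π hπ o a
    show 0 ≤ (βp * (β * π)) o a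
    rw [hpi]; exact hπ.1 o a
  have hfwdD : ∀ π ∈ ΔAO, β * π ∈ Dd := by
    intro π hπ o
    show ∑ a, (βp * (β * π)) o a = 1
    rw [hpi]; exact hπ.2 o
  have hfwdS : ∀ π ∈ ΔAO, β * π ∈ ΔAS := by
    intro π hπ
    constructor
    · intro s a
      rw [Matrix.mul_apply]
      exact Finset.sum_nonneg fun o _ => mul_nonneg (hβpos s o) (hπ.1 o a)
    · intro s
      simp only [Matrix.mul_apply]
      rw [Finset.sum_comm]
      simp only [← Finset.mul_sum]
      simp [hπ.2, hβrow s]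
  -- backward: membership in ΔAO of βp * τ given row sums of βp*τ
  constructor
  · ext τ
    constructor
    · rintro ⟨π, hπ, rfl⟩
      exact ⟨⟨hfwdS π hπ, hfwdU π hπ⟩, hfwdC π hπ⟩
    · rintro ⟨⟨hS, hU⟩, hC⟩
      refine ⟨βp * τ, ⟨fun o a => hC o a, ?_⟩, hU_rec τ hU⟩
      intro o
      simp only [Matrix.mul_apply]
      rw [Finset.sum_comm]
      simp only [← Finset.mul_sum]
      have : ∑ s, βp o s * ∑ a, τ s a = ∑ s, βp o s := by
        apply Finset.sum_congr rfl
        intro s _; rw [hS.2 s, mul_one]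
      rw [this]
      have := congrFun hone o
      simpa [Matrix.mulVec, dotProduct] using this
  · ext τ
    constructor
    · rintro ⟨π, hπ, rfl⟩
      exact ⟨⟨hfwdU π hπ, hfwdC π hπ⟩, hfwdD π hπ⟩
    · rintro ⟨⟨hU, hC⟩, hD⟩
      exact ⟨βp * τ, ⟨fun o a => hC o a, fun o => hD o⟩, hU_rec τ hU⟩
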